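/- If (t,u) ∈ ℂ² satisfies u⁶ = t³(t−1) with 4t ≠ 3, and t' = t(9−8t)²/(4t−3)³, u' = e^{πi/6}·√3·u·(9−8t)/(4t−3)², then u'⁶ = t'³(t'−1). -/

import Mathlib

open Complex

/-- The (1+ζ)-multiplication map preserves the curve u⁶ = t³(t-1). -/
theorem curve_one_add_zeta_mult (t u : ℂ) (h : u^6 = t^3 * (t - 1))
    (ht : 4 * t ≠ 3) :
    (Complex.exp (Real.pi * Complex.I / 6) * (Real.sqrt 3 : ℂ) * u *
        (9 - 8*t) / (4*t - 3)^2)^6 =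
      (t * (9 - 8*t)^2 / (4*t - 3)^3)^3 *
        (t * (9 - 8*t)^2 / (4*t - 3)^3 - 1) := by
  have h3 : (4*t - 3 : ℂ) ≠ 0 := sub_ne_zero.mpr ht
  have he : (Complex.exp (Real.pi * Complex.I / 6))^6 = -1 := by
    rw [← Complex.exp_nat_mul]
    have : ((6:ℕ) : ℂ) * (Real.pi * Complex.I / 6) = Real.pi * Complex.I := by
      push_cast; ring
    rw [this, Complex.exp_pi_mul_I]
  have hs : ((Real.sqrt 3 : ℝ) : ℂ)^6 = 27 := by
    have h2 : ((Real.sqrt 3 : ℝ) : ℂ)^2 = 3 := by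
      norm_cast
      rw [Real.sq_sqrt]; norm_num
    calc ((Real.sqrt 3 : ℝ) : ℂ)^6 = (((Real.sqrt 3 : ℝ) : ℂ)^2)^3 := by ring
    _ = 27 := by rw [h2]; norm_num
  field_simp
  rw [he, hs, h]
  have h3' : (t*4 - 3 : ℂ) ≠ 0 := by rw [mul_comm]; exact h3
  field_simp
  ring
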